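/- Let C be the circle of radius R > 0 centered at c in the Euclidean plane ℝ², let p ∈ C, and let q be the point of C antipodal to p. Let a and b be points lying strictly between p and q on the segment pq. Then for every N ∈ ℕ and every ε > 0 there exist N distinct points x₁, …, x_N on C, each at distance less than ε from p and each different from p, such that for every point z on the segment [a, b] and all distinct indices s, l ∈ {1, …, N}, the angle ∠z x_s x_l is acute, i.e., ⟪z − x_s, x_l − x_s⟫ > 0. -/

import Mathlib

open scoped RealInnerProductSpace

abbrev Euc (d : ℕ) := EuclideanSpace ℝ (Fin d)

/-- sign lemma for the key quadratic -/
lemma aux_sign (t₀ t s m : ℝ) (ht : |t| ≤ t₀) (ht₀1 : t₀ < 1)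
    (h : (1 + t₀) * m < (1 - t₀) * s) (hm : 0 < m) :
    0 < (s - m) * ((s - m) + t * (s + m)) := by
  obtain ⟨h1, h2⟩ := abs_le.mp ht
  have ht0 : 0 ≤ t₀ := le_trans (abs_nonneg t) ht
  have hs : 0 < s := by nlinarith
  have hsm : m < s := by nlinarith
  have hsum : 0 < s + m := by linarith
  have : -t₀ * (s + m) ≤ t * (s + m) := by nlinarith
  nlinarith

set_option maxHeartbeats 2000000 in
theorem stmt11 (c p q a b : Euc 2) (R : ℝ) (hR : 0 < R)
    (hp : dist p c = R) (hq : q = (2 : ℝ) • c - p)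
    (ha : Sbtw ℝ p a q) (hb : Sbtw ℝ p b q) :
    ∀ (N : ℕ) (ε : ℝ), 0 < ε →
      ∃ x : Fin N → Euc 2, Function.Injective x ∧
        (∀ s, dist (x s) c = R ∧ dist (x s) p < ε ∧ x s ≠ p) ∧
        (∀ z ∈ segment ℝ a b, ∀ s l : Fin N, s ≠ l →
          0 < ⟪z - x s, x l - x s⟫) := by
  intro N ε hε
  -- coordinates of u = p - c
  set u0 : ℝ := p 0 - c 0 with hu0
  set u1 : ℝ := p 1 - c 1 with hu1
  have hu : u0 ^ 2 + u1 ^ 2 = R ^ 2 := by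
    have h1 : dist p c ^ 2 = R ^ 2 := by rw [hp]
    rw [EuclideanSpace.dist_eq, Real.sq_sqrt (by positivity)] at h1
    simpa [Fin.sum_univ_two, Real.dist_eq, sq_abs] using h1
  -- the circle parametrization
  set X : ℝ → Euc 2 := fun s =>
    WithLp.toLp 2 ![c 0 + ((1 - s ^ 2) / (1 + s ^ 2)) * u0 - (2 * s / (1 + s ^ 2)) * u1,
      c 1 + ((1 - s ^ 2) / (1 + s ^ 2)) * u1 + (2 * s / (1 + s ^ 2)) * u0] with hX
  have hXapp : ∀ s : ℝ, (X s) 0 = c 0 + ((1 - s ^ 2) / (1 + s ^ 2)) * u0 - (2 * s / (1 + s ^ 2)) * u1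
      ∧ (X s) 1 = c 1 + ((1 - s ^ 2) / (1 + s ^ 2)) * u1 + (2 * s / (1 + s ^ 2)) * u0 := by
    intro s; constructor <;> simp [hX]
  have hden : ∀ s : ℝ, (0:ℝ) < 1 + s ^ 2 := fun s => by positivity
  -- distance between two points of the parametrization
  have hDist : ∀ s m : ℝ, dist (X s) (X m) ^ 2
      = 4 * R ^ 2 * (s - m) ^ 2 / ((1 + s ^ 2) * (1 + m ^ 2)) := by
    intro s m
    rw [EuclideanSpace.dist_eq, Real.sq_sqrt (by positivity)]
    simp only [Fin.sum_univ_two, Real.dist_eq, sq_abs, (hXapp s).1, (hXapp s).2,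
      (hXapp m).1, (hXapp m).2]
    rw [← hu]
    field_simp
    ring
  have hXp : X 0 = p := by
    ext i
    fin_cases i
    · show (X 0) 0 = p 0
      rw [(hXapp 0).1]; simp [hu0]
    · show (X 0) 1 = p 1
      rw [(hXapp 0).2]; simp [hu1]
  have hXc : ∀ s : ℝ, dist (X s) c = R := by
    intro s
    have h2 : dist (X s) c ^ 2 = R ^ 2 := by
      rw [EuclideanSpace.dist_eq, Real.sq_sqrt (by positivity)]
      simp only [Fin.sum_univ_two, Real.dist_eq, sq_abs, (hXapp s).1, (hXapp s).2]
      rw [← hu]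
      field_simp
      ring
    rw [← Real.sqrt_sq dist_nonneg, h2, Real.sqrt_sq hR.le]
  -- the key inner product formula
  have hInner : ∀ s m t : ℝ, ⟪(c + t • (p - c)) - X s, X m - X s⟫
      = 2 * R ^ 2 * ((s - m) * ((s - m) + t * (s + m))) / ((1 + s ^ 2) * (1 + m ^ 2)) := by
    intro s m t
    have e0 : ((c + t • (p - c)) - X s) 0 = c 0 + t * u0 - (X s) 0 := by
      simp [hu0]
    have e1 : ((c + t • (p - c)) - X s) 1 = c 1 + t * u1 - (X s) 1 := by
      simp [hu1]
    have f0 : (X m - X s) 0 = (X m) 0 - (X s) 0 := by simp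
    have f1 : (X m - X s) 1 = (X m) 1 - (X s) 1 := by simp
    rw [PiLp.inner_apply, Fin.sum_univ_two, e0, e1, f0, f1,
      (hXapp s).1, (hXapp s).2, (hXapp m).1, (hXapp m).2]
    simp only [RCLike.inner_apply, conj_trivial]
    rw [← hu]
    field_simp
    ring
  -- extract parameters for a and b
  have hline : ∀ y : Euc 2, Sbtw ℝ p y q → ∃ t : ℝ, |t| < 1 ∧ y = c + t • (p - c) := by
    intro y hy
    have hseg : y ∈ segment ℝ p q := hy.wbtw.mem_segment
    rw [segment_eq_image] at hseg
    obtain ⟨θ, hθ, hyθ⟩ := hseg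
    have hθ0 : θ ≠ 0 := by
      rintro rfl
      exact hy.ne_left (by simpa using hyθ.symm)
    have hθ1 : θ ≠ 1 := by
      rintro rfl
      exact hy.ne_right (by simpa using hyθ.symm)
    refine ⟨1 - 2 * θ, ?_, ?_⟩
    · rw [abs_lt]
      constructor
      · have : θ < 1 := lt_of_le_of_ne hθ.2 hθ1
        linarith
      · have : 0 < θ := lt_of_le_of_ne hθ.1 (Ne.symm hθ0)
        linarith
    · rw [← hyθ, hq]
      module
  obtain ⟨ta, hta, hA⟩ := hline a ha
  obtain ⟨tb, htb, hB⟩ := hline b hb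
  set t₀ : ℝ := max |ta| |tb| with ht₀def
  have ht₀0 : 0 ≤ t₀ := le_trans (abs_nonneg ta) (le_max_left _ _)
  have ht₀1 : t₀ < 1 := max_lt hta htb
  -- the geometric ratio
  set r : ℝ := (1 + t₀) / (1 - t₀) + 1 with hrdef
  have h1t : (0:ℝ) < 1 - t₀ := by linarith
  have hr1 : 1 < r := by
    have : 0 < (1 + t₀) / (1 - t₀) := by positivity
    rw [hrdef]; linarith
  have hrkey : (1 - t₀) * r = 2 := by
    rw [hrdef]
    field_simp
    ring
  have hr0 : 0 < r := lt_trans one_pos hr1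
  -- the scale
  set δ : ℝ := ε / (4 * R * r ^ N) with hδdef
  have hδ0 : 0 < δ := by rw [hδdef]; positivity
  set S : Fin N → ℝ := fun i => δ * r ^ (i.val + 1) with hSdef
  have hS0 : ∀ i, 0 < S i := by intro i; simp only [hSdef]; positivity
  have hSmono : ∀ i j : Fin N, i.val < j.val → r * S i ≤ S j := by
    intro i j hij
    have : r ^ (i.val + 2) ≤ r ^ (j.val + 1) := pow_le_pow_right₀ hr1.le (by omega)
    calc r * S i = δ * r ^ (i.val + 2) := by rw [hSdef]; ring
    _ ≤ δ * r ^ (j.val + 1) := by nlinarith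
    _ = S j := rfl
  have hSsmall : ∀ i : Fin N, 2 * R * S i ≤ ε / 2 := by
    intro i
    have h1 : r ^ (i.val + 1) ≤ r ^ N := pow_le_pow_right₀ hr1.le (by omega)
    have hp1 : 0 < r ^ N := pow_pos hr0 N
    have hRne : (R:ℝ) ≠ 0 := ne_of_gt hR
    calc 2 * R * S i = ε / 2 * (r ^ (i.val + 1) / r ^ N) := by
          rw [hSdef, hδdef]; field_simp; ring
      _ ≤ ε / 2 * 1 :=
          mul_le_mul_of_nonneg_left ((div_le_one hp1).mpr h1) (by linarith)
      _ = ε / 2 := mul_one _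
  -- key ratio estimate
  have hratio : ∀ i j : Fin N, i.val < j.val → (1 + t₀) * S i < (1 - t₀) * S j := by
    intro i j hij
    have h1 : r * S i ≤ S j := hSmono i j hij
    have h2 : (1 - t₀) * (r * S i) = 2 * S i := by rw [← mul_assoc, hrkey]
    have h3 : (1 - t₀) * (r * S i) ≤ (1 - t₀) * S j :=
      mul_le_mul_of_nonneg_left h1 (by linarith)
    have := hS0 i
    nlinarith
  refine ⟨fun i => X (S i), ?_, ?_, ?_⟩
  · -- injectivity
    intro i j hij0
    have hij : X (S i) = X (S j) := hij0
    by_contra hne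
    have hSne : S i ≠ S j := by
      rcases lt_trichotomy i.val j.val with h | h | h
      · exact ne_of_lt (by nlinarith [hSmono i j h, hS0 i, hr1])
      · exact absurd (Fin.ext h) hne
      · exact (ne_of_lt (by nlinarith [hSmono j i h, hS0 j, hr1])).symm
    have hd : dist (X (S i)) (X (S j)) ^ 2 = 0 := by rw [hij]; simp
    rw [hDist] at hd
    rw [div_eq_zero_iff] at hd
    have d1 := hden (S i); have d2 := hden (S j)
    have hnum : 4 * R ^ 2 * (S i - S j) ^ 2 = 0 := by
      rcases hd with hd | hd
      · exact hd
      · nlinarith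
    have h5 : (S i - S j) ^ 2 = 0 := by
      rcases mul_eq_zero.mp hnum with h' | h'
      · nlinarith
      · exact h'
    have : S i - S j = 0 := by
      exact pow_eq_zero_iff (by norm_num) |>.mp h5
    exact hSne (by linarith)
  · -- on circle, close to p, ≠ p
    intro i
    have hdp : dist (X (S i)) p ^ 2 = 4 * R ^ 2 * (S i) ^ 2 / (1 + (S i) ^ 2) := by
      have := hDist (S i) 0
      rw [hXp] at this
      simpa using this
    have hpos : 0 < dist (X (S i)) p ^ 2 := by
      rw [hdp]
      have := hS0 i
      positivity
    refine ⟨hXc (S i), ?_, ?_⟩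
    · have hle : dist (X (S i)) p ^ 2 ≤ (2 * R * S i) ^ 2 := by
        rw [hdp]
        rw [div_le_iff₀ (hden (S i))]
        have := hS0 i
        nlinarith [sq_nonneg (S i)]
      have h2 : (2 * R * S i) < ε := lt_of_le_of_lt (hSsmall i) (by linarith)
      have h3 : dist (X (S i)) p ^ 2 < ε ^ 2 := by
        have h0 : 0 ≤ 2 * R * S i := by positivity
        nlinarith
      exact lt_of_pow_lt_pow_left₀ 2 hε.le h3
    · intro heq
      have heq' : X (S i) = p := heq
      rw [heq'] at hpos
      simp at hpos
  · -- the angle condition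
    intro z hz s l hsl
    -- z = c + t • (p - c) with |t| ≤ t₀
    obtain ⟨μ, ν, hμ, hν, hμν, hzdef⟩ := hz
    set t : ℝ := μ * ta + ν * tb with htdef
    have hzt : z = c + t • (p - c) := by
      have hzc : z = (μ + ν) • c + t • (p - c) := by
        rw [← hzdef, hA, hB, htdef]
        module
      rw [hzc, hμν, one_smul]
    have htle : |t| ≤ t₀ := by
      calc |t| ≤ |μ * ta| + |ν * tb| := abs_add_le _ _
        _ = μ * |ta| + ν * |tb| := by
            rw [abs_mul, abs_mul, abs_of_nonneg hμ, abs_of_nonneg hν]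
        _ ≤ μ * t₀ + ν * t₀ := by
            have h1 : |ta| ≤ t₀ := le_max_left _ _
            have h2 : |tb| ≤ t₀ := le_max_right _ _
            nlinarith
        _ = t₀ := by rw [← add_mul, hμν, one_mul]
    rw [hzt, hInner]
    have hkey : 0 < (S s - S l) * ((S s - S l) + t * (S s + S l)) := by
      rcases lt_trichotomy s.val l.val with h | h | h
      · have := aux_sign t₀ (-t) (S l) (S s) (by rwa [abs_neg]) ht₀1 (hratio s l h) (hS0 s)
        nlinarith [this]
      · exact absurd (Fin.ext h) hsl
      · exact aux_sign t₀ t (S s) (S l) htle ht₀1 (hratio l s h) (hS0 l)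
    have d1 := hden (S s); have d2 := hden (S l)
    positivity
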